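/- Let p, q be primes with q dividing (p^p-1)/(p-1), let M in GL_p(F_p) have order q, and let w be a nonzero vector in V = F_p^p. Then the vectors (M^i - I)w for i = 1, 2, ..., p span V over F_p. -/

import Mathlib

open Matrix Module

lemma aux_count (p q : ℕ) (hp : p.Prime) (hq : q.Prime)
    (A : Matrix (Fin p) (Fin p) (ZMod p)) (hA : A ^ q = 1)
    (W : Submodule (ZMod p) (Fin p → ZMod p)) (hW : ∀ v ∈ W, A.mulVec v ∈ W) :
    p ^ (finrank (ZMod p) ↥(W ⊓ LinearMap.ker (Matrix.mulVecLin (A - 1)))) ≡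
      p ^ (finrank (ZMod p) ↥W) [MOD q] := by
  haveI : Fact p.Prime := ⟨hp⟩
  haveI : Fact q.Prime := ⟨hq⟩
  haveI : Fact (1 < q) := ⟨hq.one_lt⟩
  have hpow_mem : ∀ (n : ℕ) (v : Fin p → ZMod p), v ∈ W → A ^ n *ᵥ v ∈ W := by
    intro n
    induction n with
    | zero => intro v hv; simpa using hv
    | succ n ih =>
      intro v hv
      have : A ^ (n + 1) *ᵥ v = A *ᵥ (A ^ n *ᵥ v) := by
        rw [Matrix.mulVec_mulVec, pow_succ']
      rw [this]
      exact hW _ (ih v hv)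
  have key : ∀ x : ℕ, A ^ (x % q) = A ^ x := by
    intro x
    conv_rhs => rw [← Nat.div_add_mod x q]
    rw [pow_add, pow_mul, hA, one_pow, one_mul]
  letI act : MulAction (Multiplicative (ZMod q)) ↥W :=
    { smul := fun z v => ⟨A ^ (Multiplicative.toAdd z).val *ᵥ v.1, hpow_mem _ _ v.2⟩
      one_smul := by
        intro v
        apply Subtype.ext
        show A ^ (Multiplicative.toAdd 1 : ZMod q).val *ᵥ v.1 = v.1
        simp [ZMod.val_zero]
      mul_smul := by
        intro a b v
        apply Subtype.ext
        show A ^ (Multiplicative.toAdd (a * b)).val *ᵥ v.1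
          = A ^ (Multiplicative.toAdd a).val *ᵥ (A ^ (Multiplicative.toAdd b).val *ᵥ v.1)
        rw [Matrix.mulVec_mulVec, ← pow_add]
        have : (Multiplicative.toAdd (a * b)).val
            = ((Multiplicative.toAdd a).val + (Multiplicative.toAdd b).val) % q :=
          ZMod.val_add _ _
        rw [this, key] }
  have hPG : IsPGroup q (Multiplicative (ZMod q)) := by
    apply IsPGroup.of_card (n := 1)
    simp [Nat.card_eq_fintype_card, ZMod.card]
  have hmod := hPG.card_modEq_card_fixedPoints ↥W
  have hfix : ∀ v : ↥W, v ∈ MulAction.fixedPoints (Multiplicative (ZMod q)) ↥W ↔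
      A *ᵥ v.1 = v.1 := by
    intro v
    constructor
    · intro h
      have h2 : A ^ (1 : ZMod q).val *ᵥ v.1 = v.1 :=
        congrArg Subtype.val (h (Multiplicative.ofAdd (1 : ZMod q)))
      rwa [ZMod.val_one, pow_one] at h2
    · intro h g
      apply Subtype.ext
      show A ^ (Multiplicative.toAdd g).val *ᵥ v.1 = v.1
      generalize (Multiplicative.toAdd g).val = n
      induction n with
      | zero => simp
      | succ n ih =>
        rw [pow_succ, ← Matrix.mulVec_mulVec, h, ih]
  -- equiv between fixed points and the submodule W ⊓ ker
  have e : MulAction.fixedPoints (Multiplicative (ZMod q)) ↥W ≃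
      ↥(W ⊓ LinearMap.ker (Matrix.mulVecLin (A - 1))) := by
    refine ⟨fun x => ⟨x.1.1, ?_⟩, fun y => ⟨⟨y.1, y.2.1⟩, ?_⟩, fun x => rfl, fun y => rfl⟩
    · refine ⟨x.1.2, ?_⟩
      have hx := (hfix x.1).mp x.2
      show _ ∈ LinearMap.ker (Matrix.mulVecLin (A - 1))
      rw [LinearMap.mem_ker, Matrix.mulVecLin_apply, Matrix.sub_mulVec,
        Matrix.one_mulVec, hx, sub_self]
    · apply (hfix _).mpr
      have hy : y.1 ∈ LinearMap.ker (Matrix.mulVecLin (A - 1)) := y.2.2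
      rw [LinearMap.mem_ker, Matrix.mulVecLin_apply, Matrix.sub_mulVec,
        Matrix.one_mulVec, sub_eq_zero] at hy
      exact hy
  have hc1 : Nat.card (MulAction.fixedPoints (Multiplicative (ZMod q)) ↥W)
      = p ^ (finrank (ZMod p) ↥(W ⊓ LinearMap.ker (Matrix.mulVecLin (A - 1)))) := by
    rw [Nat.card_congr e]
    haveI : Fintype ↥(W ⊓ LinearMap.ker (Matrix.mulVecLin (A - 1))) := Fintype.ofFinite _
    rw [Nat.card_eq_fintype_card, card_eq_pow_finrank (K := ZMod p), ZMod.card]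
  have hc2 : Nat.card ↥W = p ^ (finrank (ZMod p) ↥W) := by
    haveI : Fintype ↥W := Fintype.ofFinite _
    rw [Nat.card_eq_fintype_card, card_eq_pow_finrank (K := ZMod p), ZMod.card]
  rw [hc1, hc2] at hmod
  exact hmod.symm

theorem stmt_6 (p q : ℕ) (hp : p.Prime) (hq : q.Prime)
    (hdvd : q ∣ ∑ i ∈ Finset.range p, p ^ i)
    (M : GL (Fin p) (ZMod p)) (hM : orderOf M = q)
    (w : Fin p → ZMod p) (hw : w ≠ 0) :
    Submodule.span (ZMod p)
      {v : Fin p → ZMod p | ∃ i : ℕ, 1 ≤ i ∧ i ≤ p ∧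
        v = ((M : Matrix (Fin p) (Fin p) (ZMod p)) ^ i - 1).mulVec w} = ⊤ := by
  haveI : Fact p.Prime := ⟨hp⟩
  haveI : Fact q.Prime := ⟨hq⟩
  set A := (M : Matrix (Fin p) (Fin p) (ZMod p)) with hA
  have hAq : A ^ q = 1 := by
    have h1 := pow_orderOf_eq_one M
    rw [hM] at h1
    calc A ^ q = ((M ^ q : GL (Fin p) (ZMod p)) : Matrix (Fin p) (Fin p) (ZMod p)) := by
          rw [Units.val_pow_eq_pow_val]
      _ = 1 := by rw [h1]; rfl
  have hAne : A ≠ 1 := by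
    intro h
    have : M = 1 := Units.ext h
    rw [this, orderOf_one] at hM
    exact hq.one_lt.ne' hM.symm
  -- arithmetic mod q
  have hsum : (∑ i ∈ Finset.range p, ((p : ZMod q)) ^ i) = 0 := by
    have h2 : ((∑ i ∈ Finset.range p, p ^ i : ℕ) : ZMod q) = 0 :=
      (ZMod.natCast_eq_zero_iff _ _).mpr hdvd
    push_cast at h2
    exact h2
  have hxp : (p : ZMod q) ^ p = 1 := by
    have h3 := geom_sum_mul (p : ZMod q) p
    rw [hsum, zero_mul] at h3
    exact (eq_of_sub_eq_zero h3.symm).symm ▸ rfl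
  have hxne : (p : ZMod q) ≠ 1 := by
    intro h
    rw [h] at hsum
    simp only [one_pow, Finset.sum_const, Finset.card_range, nsmul_eq_mul, mul_one] at hsum
    exact one_ne_zero (h ▸ hsum)
  have hppos : 1 ≤ p := hp.one_lt.le.trans' (by norm_num)
  let ux : (ZMod q)ˣ :=
    ⟨(p : ZMod q), (p : ZMod q) ^ (p - 1),
      by rw [← pow_succ', Nat.sub_add_cancel hppos]; exact hxp,
      by rw [← pow_succ, Nat.sub_add_cancel hppos]; exact hxp⟩
  have horder : orderOf ux = p := by
    apply orderOf_eq_prime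
    · apply Units.ext
      rw [Units.val_pow_eq_pow_val]
      exact hxp
    · intro h
      exact hxne (congrArg Units.val h)
  have hdiv : ∀ a b : ℕ, p ^ a ≡ p ^ b [MOD q] → a ≡ b [MOD p] := by
    intro a b h
    have h4 : ((p : ZMod q)) ^ a = (p : ZMod q) ^ b := by
      have h5 := (ZMod.natCast_eq_natCast_iff _ _ _).mpr h
      push_cast at h5
      exact h5
    have h6 : ux ^ a = ux ^ b := by
      apply Units.ext
      rw [Units.val_pow_eq_pow_val, Units.val_pow_eq_pow_val]
      exact h4
    rwa [pow_eq_pow_iff_modEq, horder] at h6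
  have hrankV : finrank (ZMod p) (Fin p → ZMod p) = p := Module.finrank_fin_fun (ZMod p)
  -- C1 : fixed space is trivial
  have hker : LinearMap.ker (Matrix.mulVecLin (A - 1)) = ⊥ := by
    have hcount := aux_count p q hp hq A hAq ⊤ (fun v _ => Submodule.mem_top)
    rw [top_inf_eq] at hcount
    have htop : finrank (ZMod p) (↥(⊤ : Submodule (ZMod p) (Fin p → ZMod p))) = p := by
      rw [finrank_top, hrankV]
    rw [htop] at hcount
    have hj := hdiv _ _ hcount
    have hpj : p ∣ finrank (ZMod p) ↥(LinearMap.ker (Matrix.mulVecLin (A - 1))) :=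
      (Nat.modEq_zero_iff_dvd).mp (hj.trans (Nat.modEq_zero_iff_dvd.mpr dvd_rfl))
    have hjle : finrank (ZMod p) ↥(LinearMap.ker (Matrix.mulVecLin (A - 1))) ≤ p := by
      have := Submodule.finrank_le (LinearMap.ker (Matrix.mulVecLin (A - 1)) : Submodule (ZMod p) (Fin p → ZMod p))
      rwa [hrankV] at this
    rcases hpj with ⟨c, hc⟩
    rcases Nat.lt_or_ge c 1 with h | h
    · interval_cases c
      · rw [mul_zero] at hc
        exact Submodule.finrank_eq_zero.mp hc
    · exfalso
      have : finrank (ZMod p) ↥(LinearMap.ker (Matrix.mulVecLin (A - 1))) = p := by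
        have := Nat.le_of_eq hc.symm
        nlinarith [hp.pos, hjle, hc]
      have h6 : LinearMap.ker (Matrix.mulVecLin (A - 1)) = ⊤ :=
        Submodule.eq_top_of_finrank_eq (by rw [this, hrankV])
      -- then A = 1
      apply hAne
      have h7 : ∀ v : Fin p → ZMod p, (A - 1) *ᵥ v = 0 := by
        intro v
        have : v ∈ LinearMap.ker (Matrix.mulVecLin (A - 1)) := h6 ▸ Submodule.mem_top
        simpa [Matrix.mulVecLin_apply, Matrix.sub_mulVec, Matrix.one_mulVec] using this
      have h8 : A - 1 = 0 := by
        ext i j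
        have := congrFun (h7 (Pi.single j 1)) i
        rw [Matrix.mulVec_single_one] at this
        simpa using this
      rwa [sub_eq_zero] at h8
  -- C2 : invariant subspaces are trivial
  have hC2 : ∀ W : Submodule (ZMod p) (Fin p → ZMod p),
      (∀ v ∈ W, A *ᵥ v ∈ W) → W = ⊥ ∨ W = ⊤ := by
    intro W hWinv
    have hcount := aux_count p q hp hq A hAq W hWinv
    rw [hker, inf_bot_eq] at hcount
    rw [finrank_bot] at hcount
    have hj := (hdiv _ _ hcount).symm
    have hpj : p ∣ finrank (ZMod p) ↥W :=
      (Nat.modEq_zero_iff_dvd).mp hj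
    have hjle : finrank (ZMod p) ↥W ≤ p := by
      have := Submodule.finrank_le W
      rwa [hrankV] at this
    rcases hpj with ⟨c, hc⟩
    rcases Nat.lt_or_ge c 1 with h | h
    · interval_cases c
      · rw [mul_zero] at hc
        exact Or.inl (Submodule.finrank_eq_zero.mp hc)
    · right
      have : finrank (ZMod p) ↥W = p := by nlinarith [hp.pos]
      exact Submodule.eq_top_of_finrank_eq (by rw [this, hrankV])
    -- main spanning argument
  set u := (A - 1) *ᵥ w with hu_def
  have hu : u ≠ 0 := by
    intro h
    apply hw
    have hwk : w ∈ LinearMap.ker (Matrix.mulVecLin (A - 1)) := by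
      rw [LinearMap.mem_ker, Matrix.mulVecLin_apply]; exact h
    rwa [hker, Submodule.mem_bot] at hwk
  set S := {v : Fin p → ZMod p | ∃ i : ℕ, 1 ≤ i ∧ i ≤ p ∧ v = (A ^ i - 1) *ᵥ w} with hS
  set Wk : ℕ → Submodule (ZMod p) (Fin p → ZMod p) :=
    fun k => Submodule.span (ZMod p) {v | ∃ i < k, v = A ^ i *ᵥ u} with hWk
  have hWmono : ∀ j k : ℕ, j ≤ k → Wk j ≤ Wk k := by
    intro j k hjk
    apply Submodule.span_mono
    rintro v ⟨i, hi, rfl⟩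
    exact ⟨i, lt_of_lt_of_le hi hjk, rfl⟩
  have hgen : ∀ i, i < p → A ^ i *ᵥ u ∈ Submodule.span (ZMod p) S := by
    intro i hi
    have hmul : A ^ i * (A - 1) = (A ^ (i + 1) - 1) - (A ^ i - 1) := by
      rw [mul_sub, mul_one, ← pow_succ, sub_sub_sub_cancel_right]
    have heq : A ^ i *ᵥ u = (A ^ (i + 1) - 1) *ᵥ w - (A ^ i - 1) *ᵥ w := by
      rw [hu_def, Matrix.mulVec_mulVec, hmul, Matrix.sub_mulVec]
    rw [heq]
    apply Submodule.sub_mem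
    · exact Submodule.subset_span ⟨i + 1, by omega, by omega, rfl⟩
    · rcases Nat.eq_zero_or_pos i with h0 | h0
      · subst h0
        have : (A ^ 0 - 1 : Matrix (Fin p) (Fin p) (ZMod p)) *ᵥ w = 0 := by
          rw [pow_zero, sub_self, Matrix.zero_mulVec]
        rw [this]
        exact Submodule.zero_mem _
      · exact Submodule.subset_span ⟨i, h0, le_of_lt hi, rfl⟩
  have hWpS : Wk p ≤ Submodule.span (ZMod p) S := by
    rw [hWk]
    apply Submodule.span_le.mpr
    rintro v ⟨i, hi, rfl⟩
    exact hgen i hi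
  have humem : ∀ k : ℕ, 0 < k → u ∈ Wk k := by
    intro k hk
    apply Submodule.subset_span
    exact ⟨0, hk, by rw [pow_zero, Matrix.one_mulVec]⟩
  have hWtop : Wk p = ⊤ := by
    by_cases hstep : ∃ k, k < p ∧ Wk (k + 1) ≤ Wk k
    · obtain ⟨k, hk, hle⟩ := hstep
      have heq : Wk (k + 1) = Wk k := le_antisymm hle (hWmono k (k + 1) (Nat.le_succ k))
      have hk0 : 0 < k := by
        rcases Nat.eq_zero_or_pos k with h0 | h0
        · exfalso
          subst h0
          have hu1 : u ∈ Wk 0 := heq ▸ humem 1 Nat.one_pos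
          have hW0 : Wk 0 = ⊥ := by
            rw [hWk]
            convert Submodule.span_empty
            ext v
            simp
          rw [hW0, Submodule.mem_bot] at hu1
          exact hu hu1
        · exact h0
      have hinv : ∀ v ∈ Wk k, A *ᵥ v ∈ Wk k := by
        intro v hv
        refine Submodule.span_induction ?_ ?_ ?_ ?_ hv
        · rintro x ⟨i, hix, rfl⟩
          have : A *ᵥ (A ^ i *ᵥ u) = A ^ (i + 1) *ᵥ u := by
            rw [Matrix.mulVec_mulVec, ← pow_succ']
          rw [this]
          have : A ^ (i + 1) *ᵥ u ∈ Wk (k + 1) :=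
            Submodule.subset_span ⟨i + 1, by omega, rfl⟩
          rwa [heq] at this
        · rw [Matrix.mulVec_zero]; exact Submodule.zero_mem _
        · intro x y hx hy hx' hy'
          rw [Matrix.mulVec_add]; exact Submodule.add_mem _ hx' hy'
        · intro a x hx hx'
          rw [Matrix.mulVec_smul]; exact Submodule.smul_mem _ _ hx'
      rcases hC2 (Wk k) hinv with hbot | htop2
      · exfalso
        have := humem k hk0
        rw [hbot, Submodule.mem_bot] at this
        exact hu this
      · exact le_antisymm le_top (htop2 ▸ hWmono k p hk.le)
    · push_neg at hstep
      have hlt : ∀ k, k < p → Wk k < Wk (k + 1) := fun k hk =>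
        lt_of_le_of_ne (hWmono k (k + 1) (Nat.le_succ k))
          (fun h => hstep k hk (le_of_eq h.symm))
      have hrank : ∀ k, k ≤ p → k ≤ finrank (ZMod p) (Wk k) := by
        intro k
        induction k with
        | zero => intro _; exact Nat.zero_le _
        | succ n ih =>
          intro h
          have h1 := ih (by omega)
          have h2 := Submodule.finrank_lt_finrank_of_lt (hlt n (by omega))
          omega
      have hle2 : finrank (ZMod p) (Wk p) ≤ p := by
        have := Submodule.finrank_le (Wk p)
        rwa [hrankV] at this
      have : finrank (ZMod p) (Wk p) = p := le_antisymm hle2 (hrank p le_rfl)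
      exact Submodule.eq_top_of_finrank_eq (by rw [this, hrankV])
  exact eq_top_iff.mpr (hWtop ▸ hWpS)
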